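/- Let B be a k×k real matrix with minimal singular value σ and spectral norm ‖B‖₂ ≤ 1. Then 1 − ‖BᵀB‖_F²/‖B‖_F² ≥ (σ²/k)(k − ‖B‖_F²). -/

import Mathlib

open Matrix

/-- Squared Frobenius norm of a real matrix. -/
noncomputable def frobSq {m n : ℕ} (A : Matrix (Fin m) (Fin n) ℝ) : ℝ :=
  Matrix.trace (Aᵀ * A)

lemma psd_trace_nonneg {n : Type*} [Fintype n] [DecidableEq n]
    {A : Matrix n n ℝ} (h : A.PosSemidef) : 0 ≤ A.trace := by
  rw [Matrix.trace]
  apply Finset.sum_nonneg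
  intro i _
  have := h.dotProduct_mulVec_nonneg (Pi.single i 1)
  simpa [dotProduct, Matrix.mulVec, Pi.single_apply, mul_ite, ite_mul,
    Finset.sum_ite_eq', Finset.sum_ite_eq] using this

lemma trace_mul_psd_nonneg {n : Type*} [Fintype n] [DecidableEq n]
    {A C : Matrix n n ℝ} (hA : A.PosSemidef) (hC : C.PosSemidef) :
    0 ≤ (A * C).trace := by
  obtain ⟨D, hD⟩ : ∃ D : Matrix n n ℝ, A = Dᵀ * D := by
    open scoped MatrixOrder in
    obtain ⟨X, hX, -, rfl⟩ := CFC.exists_sqrt_of_isSelfAdjoint_of_quasispectrumRestricts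
      hA.isHermitian (QuasispectrumRestricts.nnreal_of_nonneg hA.nonneg)
    exact ⟨X, by rw [show Xᵀ = star X from rfl, hX.star_eq]⟩
  rw [hD, Matrix.mul_assoc, Matrix.trace_mul_comm]
  exact psd_trace_nonneg (hC.mul_mul_conjTranspose_same D)

theorem min_singular_value_potential_bound {k : ℕ} (hk : 0 < k)
    (B : Matrix (Fin k) (Fin k) ℝ) (hBne : B ≠ 0) (σ : ℝ) (hσ0 : 0 ≤ σ)
    -- σ is a lower bound on the singular values of B: σ‖x‖ ≤ ‖Bx‖ for all x
    (hσ : ∀ x : Fin k → ℝ, σ ^ 2 * ∑ j, (x j) ^ 2 ≤ ∑ i, (B.mulVec x i) ^ 2)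
    -- spectral norm ‖B‖₂ ≤ 1: ‖Bx‖ ≤ ‖x‖ for all x
    (hB2 : ∀ x : Fin k → ℝ, ∑ i, (B.mulVec x i) ^ 2 ≤ ∑ j, (x j) ^ 2) :
    (σ ^ 2 / k) * (k - frobSq B) ≤ 1 - frobSq (Bᵀ * B) / frobSq B := by
  set M : Matrix (Fin k) (Fin k) ℝ := Bᵀ * B with hM
  have hMherm : M.IsHermitian := Matrix.isHermitian_conjTranspose_mul_self B
  have hMT : Mᵀ = M := hMherm
  -- quadratic form of M
  have hquad : ∀ x : Fin k → ℝ, x ⬝ᵥ (M *ᵥ x) = ∑ i, (B.mulVec x i) ^ 2 := by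
    intro x
    rw [hM, ← Matrix.mulVec_mulVec, Matrix.dotProduct_mulVec, Matrix.vecMul_transpose]
    simp [dotProduct, sq]
  have hquadx : ∀ x : Fin k → ℝ, x ⬝ᵥ x = ∑ j, (x j) ^ 2 := by
    intro x; simp [dotProduct, sq]
  -- PSD facts
  have hPSD1 : (1 - M).PosSemidef := by
    refine Matrix.PosSemidef.of_dotProduct_mulVec_nonneg ?_ ?_
    · exact (Matrix.isHermitian_one).sub hMherm
    · intro x
      have := hB2 x
      simp only [Matrix.sub_mulVec, dotProduct_sub, Matrix.one_mulVec, star_trivial]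
      rw [hquad, hquadx]
      linarith
  have hPSD2 : (M - σ ^ 2 • 1).PosSemidef := by
    refine Matrix.PosSemidef.of_dotProduct_mulVec_nonneg ?_ ?_
    · show (M - σ ^ 2 • 1)ᴴ = _
      simp [Matrix.conjTranspose_smul, hMherm.eq, hMT]
    · intro x
      have := hσ x
      simp only [Matrix.sub_mulVec, dotProduct_sub, Matrix.smul_mulVec,
        Matrix.one_mulVec, dotProduct_smul, star_trivial, smul_eq_mul]
      rw [hquad, hquadx]
      linarith
  have key : 0 ≤ ((M - σ ^ 2 • 1) * (1 - M)).trace := trace_mul_psd_nonneg hPSD2 hPSD1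
  -- notation
  have hS : frobSq B = M.trace := by rw [frobSq]
  have hT : frobSq (Bᵀ * B) = (M * M).trace := by rw [frobSq, ← hM, hMT]
  set S : ℝ := M.trace with hSdef
  set T : ℝ := (M * M).trace with hTdef
  have htr1 : (1 : Matrix (Fin k) (Fin k) ℝ).trace = (k : ℝ) := by
    simp [Matrix.trace_one]
  -- expand key
  have key' : σ ^ 2 * ((k : ℝ) - S) ≤ S - T := by
    have hexp : ((M - σ ^ 2 • 1) * (1 - M)).trace
        = S - T - σ ^ 2 * (k : ℝ) + σ ^ 2 * S := by
      rw [sub_mul, mul_sub, mul_sub, mul_one, mul_one, Matrix.smul_mul, one_mul]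
      rw [Matrix.trace_sub, Matrix.trace_sub, Matrix.trace_sub, Matrix.trace_smul,
        Matrix.trace_smul, htr1]
      simp [smul_eq_mul]
      ring
    rw [hexp] at key
    nlinarith
  -- S ≤ k
  have hSk : S ≤ (k : ℝ) := by
    have := psd_trace_nonneg hPSD1
    rw [Matrix.trace_sub, htr1] at this
    linarith
  -- S > 0
  have hS0 : 0 < S := by
    have hSsum : S = ∑ i, ∑ j, (B j i) ^ 2 := by
      rw [hSdef, Matrix.trace, hM]
      simp [Matrix.mul_apply, Matrix.diag, sq]
    obtain ⟨i, j, hij⟩ : ∃ i j, B i j ≠ 0 := by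
      by_contra h
      push_neg at h
      exact hBne (by ext i j; simpa using h i j)
    rw [hSsum]
    apply Finset.sum_pos' (fun a _ => Finset.sum_nonneg fun b _ => sq_nonneg _)
    exact ⟨j, Finset.mem_univ _, Finset.sum_pos' (fun b _ => sq_nonneg _)
      ⟨i, Finset.mem_univ _, by positivity⟩⟩
  have hk' : (0 : ℝ) < k := by exact_mod_cast hk
  have h1 : 1 - T / S = (S - T) / S := by field_simp
  rw [show frobSq M = T from hT, hS, h1, div_mul_eq_mul_div, div_le_div_iff₀ hk' hS0]
  nlinarith [mul_nonneg (mul_nonneg (sq_nonneg σ) (sub_nonneg.mpr hSk)) (sub_nonneg.mpr hSk),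
    mul_le_mul_of_nonneg_left key' (le_of_lt hk')]
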